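/- Let T be a positive linear contraction on real Lᵖ(X), 1 ≤ p < ∞. Suppose f ≥ 0 satisfies T f = f, and E is a Borel set such that T maps functions supported in E to functions supported in E. Then T(χ_E f) = χ_E f. -/

import Mathlib

open MeasureTheory Filter

/-- Strict monotonicity of the `Lᵖ` norm: if `0 ≤ h₁ ≤ h₂` and `‖h₂‖ ≤ ‖h₁‖`,
then `h₁ = h₂` (for `p ≠ ∞`). -/
lemma Lp_eq_of_le_of_norm_le
    {X : Type*} [MeasurableSpace X] {μ : Measure X}
    {p : ENNReal} [Fact (1 ≤ p)] (hp : p ≠ ⊤)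
    {h₁ h₂ : Lp ℝ p μ} (h0 : 0 ≤ h₁) (hle : h₁ ≤ h₂) (hn : ‖h₂‖ ≤ ‖h₁‖) :
    h₁ = h₂ := by
  have hp0 : p ≠ 0 := (lt_of_lt_of_le zero_lt_one (Fact.out : 1 ≤ p)).ne'
  have hq : 0 < p.toReal := ENNReal.toReal_pos hp0 hp
  have hsn : eLpNorm (⇑h₂) p μ ≤ eLpNorm (⇑h₁) p μ := by
    rw [Lp.norm_def, Lp.norm_def] at hn
    exact (ENNReal.toReal_le_toReal (Lp.eLpNorm_ne_top _) (Lp.eLpNorm_ne_top _)).mp hn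
  rw [eLpNorm_eq_lintegral_rpow_enorm_toReal hp0 hp,
      eLpNorm_eq_lintegral_rpow_enorm_toReal hp0 hp] at hsn
  have hlint : ∫⁻ x, (‖h₂ x‖₊ : ENNReal) ^ p.toReal ∂μ
      ≤ ∫⁻ x, (‖h₁ x‖₊ : ENNReal) ^ p.toReal ∂μ :=
    (ENNReal.rpow_le_rpow_iff (by positivity : (0:ℝ) < 1 / p.toReal)).mp hsn
  have h0ae : (0 : X → ℝ) ≤ᵐ[μ] ⇑h₁ := (Lp.coeFn_nonneg h₁).mpr h0
  have hleae : ⇑h₁ ≤ᵐ[μ] ⇑h₂ := (Lp.coeFn_le h₁ h₂).mpr hle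
  have hptle : (fun x => (‖h₁ x‖₊ : ENNReal) ^ p.toReal)
      ≤ᵐ[μ] fun x => (‖h₂ x‖₊ : ENNReal) ^ p.toReal := by
    filter_upwards [h0ae, hleae] with x hx0 hx
    gcongr
    simp only [ENNReal.coe_le_coe, ← NNReal.coe_le_coe, coe_nnnorm, Real.norm_eq_abs]
    rw [abs_of_nonneg hx0, abs_of_nonneg (hx0.trans hx)]
    exact hx
  have hfin : ∫⁻ x, (‖h₁ x‖₊ : ENNReal) ^ p.toReal ∂μ ≠ ⊤ := by
    intro hcontra
    have := Lp.eLpNorm_ne_top h₁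
    rw [eLpNorm_eq_lintegral_rpow_enorm_toReal hp0 hp,
      (show ∫⁻ x, ‖h₁ x‖ₑ ^ p.toReal ∂μ = ⊤ from hcontra),
      ENNReal.top_rpow_of_pos (by positivity)] at this
    exact this rfl
  have hmeas : AEMeasurable (fun x => (‖h₂ x‖₊ : ENNReal) ^ p.toReal) μ :=
    ((Lp.aestronglyMeasurable h₂).enorm).pow_const p.toReal
  have haeq := ae_eq_of_ae_le_of_lintegral_le hptle hfin hmeas hlint
  refine Lp.ext ?_
  filter_upwards [h0ae, hleae, haeq] with x hx0 hx hxeq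
  have hinj : (‖h₁ x‖₊ : ENNReal) = ‖h₂ x‖₊ :=
    ENNReal.rpow_left_injective hq.ne' hxeq
  have : ‖h₁ x‖ = ‖h₂ x‖ := by
    have := congrArg ENNReal.toReal hinj
    simpa using this
  rw [Real.norm_eq_abs, Real.norm_eq_abs, abs_of_nonneg hx0,
    abs_of_nonneg (hx0.trans hx)] at this
  exact this

/-- Key step in Theorem 13/14: if `T` is a positive contraction on real `Lᵖ`,
`T f = f` with `f ≥ 0`, and `E` is a Borel set such that `T` maps functions
supported in `E` to functions supported in `E`, then `T(χ_E f) = χ_E f`. -/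
theorem T_indicator_fixed
    {X : Type*} [MeasurableSpace X] (μ : Measure X) [SigmaFinite μ]
    (p : ENNReal) [Fact (1 ≤ p)] (hp : p ≠ ⊤)
    (T : Lp ℝ p μ →L[ℝ] Lp ℝ p μ)
    (hcontr : ∀ g, ‖T g‖ ≤ ‖g‖)
    (hpos : ∀ g : Lp ℝ p μ, 0 ≤ g → 0 ≤ T g)
    (f : Lp ℝ p μ) (hf0 : 0 ≤ f) (hfix : T f = f)
    (E : Set X) (hE : MeasurableSet E)
    (hEinv : ∀ g : Lp ℝ p μ, (∀ᵐ x ∂μ, x ∉ E → g x = 0) →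
      ∀ᵐ x ∂μ, x ∉ E → (T g) x = 0)
    (g : Lp ℝ p μ) (hg : ⇑g =ᵐ[μ] E.indicator ⇑f) :
    T g = g := by
  have hf0ae : (0 : X → ℝ) ≤ᵐ[μ] ⇑f := (Lp.coeFn_nonneg f).mpr hf0
  -- 0 ≤ g
  have hg0 : 0 ≤ g := by
    rw [← Lp.coeFn_nonneg]
    filter_upwards [hg, hf0ae] with x hx hx0
    rw [hx]
    exact Set.indicator_nonneg (fun y _ => hx0) x
  -- g ≤ f
  have hgf : g ≤ f := by
    rw [← Lp.coeFn_le]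
    filter_upwards [hg, hf0ae] with x hx hx0
    rw [hx]
    exact Set.indicator_le_self' (fun y _ => hx0) x
  -- T g ≤ f
  have hTgf : T g ≤ f := by
    have h1 : 0 ≤ T (f - g) := hpos _ (sub_nonneg.mpr hgf)
    rw [map_sub, hfix, sub_nonneg] at h1
    exact h1
  -- T g ≥ 0
  have hTg0 : 0 ≤ T g := hpos g hg0
  -- g is supported in E
  have hgsupp : ∀ᵐ x ∂μ, x ∉ E → g x = 0 := by
    filter_upwards [hg] with x hx hxE
    rw [hx, Set.indicator_of_notMem hxE]
  -- so T g is supported in E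
  have hTgsupp := hEinv g hgsupp
  -- T g ≤ g
  have hTgg : T g ≤ g := by
    rw [← Lp.coeFn_le]
    filter_upwards [(Lp.coeFn_le _ _).mpr hTgf, hTgsupp, hg,
      (Lp.coeFn_nonneg _).mpr hTg0] with x hxf hx0 hxg hxTg0
    by_cases hxE : x ∈ E
    · rw [hxg, Set.indicator_of_mem hxE]
      exact hxf
    · rw [hx0 hxE, hxg, Set.indicator_of_notMem hxE]
  -- h := f - g satisfies h ≤ T h
  set h : Lp ℝ p μ := f - g with hh
  have h0 : 0 ≤ h := sub_nonneg.mpr hgf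
  have hhTh : h ≤ T h := by
    rw [hh, map_sub, hfix]
    exact sub_le_sub_left hTgg f
  -- equality via strict monotonicity of the norm
  have heq : h = T h := Lp_eq_of_le_of_norm_le hp h0 hhTh (hcontr h)
  have : T g = T f - T h := by rw [← map_sub]; congr 1; rw [hh]; abel
  rw [this, ← heq, hfix, hh]
  abel
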